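/- Let N be a strongly connected symmetric directed graph on m vertices where each arc (j,i) carries a real matrix C_{ji} with n columns and orthonormal rows (C_{ji}C_{ji}ᵀ = I), and suppose the weighted graph is well-configured, i.e., kernel(C J̄ᵀ) = span(Ī). Let each agent update x_i(t+1) = x_i(t) − (1/(2(d_i+1))) ∑_{j∈N_i} (C_{ij}ᵀC_{ij} + C_{ji}ᵀC_{ji})(x_i(t) − x_j(t)), where d_i = |N_i|. Then all m agents reach a consensus exponentially fast: there exist z ∈ ℝ^n, c ≥ 0 and ρ ∈ [0,1) such that ‖x_i(t) − z‖ ≤ c ρᵗ for all i and t. -/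

import Mathlib

open Filter Matrix
open scoped RealInnerProductSpace

namespace Stmt7

variable {m n : ℕ}

section Defs

variable (A : Finset (Fin m × Fin m)) {k : Fin m → Fin m → ℕ}
  (C : (j i : Fin m) → Matrix (Fin (k j i)) (Fin n) ℝ)

/-- in-neighborhood -/
def NN (i : Fin m) : Finset (Fin m) := Finset.univ.filter (fun j => (j, i) ∈ A)

/-- weight -/
noncomputable def ww (i : Fin m) : ℝ := ((NN A i).card : ℝ) + 1

lemma ww_pos (i : Fin m) : 0 < ww A i := by
  have : (0:ℝ) ≤ ((NN A i).card : ℝ) := by positivity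
  rw [ww]; linarith

lemma ww_ge_one (i : Fin m) : 1 ≤ ww A i := by
  have : (0:ℝ) ≤ ((NN A i).card : ℝ) := by positivity
  rw [ww]; linarith

def MM (i j : Fin m) : Matrix (Fin n) (Fin n) ℝ :=
  (C i j)ᵀ * C i j + (C j i)ᵀ * C j i

noncomputable def Lmap : (Fin m → Fin n → ℝ) →ₗ[ℝ] (Fin m → Fin n → ℝ) where
  toFun x := fun i => x i - (1 / (2 * ww A i)) •
      ∑ j ∈ NN A i, (MM C i j).mulVec (x i - x j)
  map_add' x y := by
    funext i a
    simp only [Pi.add_apply, Pi.sub_apply, Pi.smul_apply, smul_eq_mul]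
    have h : ∀ j, (MM C i j).mulVec (x i + y i - (x j + y j)) =
        (MM C i j).mulVec (x i - x j) + (MM C i j).mulVec (y i - y j) := by
      intro j
      rw [← Matrix.mulVec_add]
      congr 1
      abel
    rw [Finset.sum_congr rfl (fun j _ => h j), Finset.sum_add_distrib]
    simp only [Pi.add_apply, Finset.sum_apply]
    ring
  map_smul' c x := by
    funext i a
    simp only [Pi.smul_apply, Pi.sub_apply, smul_eq_mul, RingHom.id_apply]
    have h : ∀ j, (MM C i j).mulVec (c • x i - c • x j) =
        c • (MM C i j).mulVec (x i - x j) := by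
      intro j
      rw [← smul_sub, Matrix.mulVec_smul]
    rw [Finset.sum_congr rfl (fun j _ => h j), ← Finset.smul_sum]
    simp only [Pi.smul_apply, Finset.sum_apply, smul_eq_mul]
    ring

noncomputable def ee : (Fin m → Fin n → ℝ) ≃ₗ[ℝ] EuclideanSpace ℝ (Fin m × Fin n) where
  toFun x := WithLp.toLp 2 (fun p : Fin m × Fin n => Real.sqrt (ww A p.1) * x p.1 p.2)
  invFun v := fun i a => v (i, a) / Real.sqrt (ww A i)
  left_inv x := by
    funext i a
    have h : Real.sqrt (ww A i) ≠ 0 := ne_of_gt (Real.sqrt_pos.2 (ww_pos A i))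
    show Real.sqrt (ww A i) * x i a / Real.sqrt (ww A i) = x i a
    field_simp
  right_inv v := by
    ext p
    have h : Real.sqrt (ww A p.1) ≠ 0 := ne_of_gt (Real.sqrt_pos.2 (ww_pos A p.1))
    show Real.sqrt (ww A p.1) * (v (p.1, p.2) / Real.sqrt (ww A p.1)) = v p
    field_simp
  map_add' x y := by
    ext p
    simp only [Pi.add_apply]
    show _ = Real.sqrt (ww A p.1) * x p.1 p.2 + Real.sqrt (ww A p.1) * y p.1 p.2
    ring
  map_smul' c x := by
    ext p
    simp only [Pi.smul_apply, smul_eq_mul, RingHom.id_apply]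
    show _ = c * (Real.sqrt (ww A p.1) * x p.1 p.2)
    ring

lemma ee_apply (x : Fin m → Fin n → ℝ) (p : Fin m × Fin n) :
    ee A x p = Real.sqrt (ww A p.1) * x p.1 p.2 := rfl

lemma ee_symm_apply (v : EuclideanSpace ℝ (Fin m × Fin n)) (i : Fin m) (a : Fin n) :
    (ee A).symm v i a = v (i, a) / Real.sqrt (ww A i) := rfl

lemma inner_ee (x y : Fin m → Fin n → ℝ) :
    ⟪ee A x, ee A y⟫ = ∑ i, ww A i * ∑ a, x i a * y i a := by
  rw [PiLp.inner_apply, Fintype.sum_prod_type]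
  refine Finset.sum_congr rfl fun i _ => ?_
  rw [Finset.mul_sum]
  refine Finset.sum_congr rfl fun a _ => ?_
  have h := Real.mul_self_sqrt (le_of_lt (ww_pos A i))
  simp only [RCLike.inner_apply, starRingEnd_apply, star_trivial, ee_apply]
  linear_combination (x i a * y i a) * h

/-- decompose a sum over arcs -/
lemma sum_A (f : Fin m → Fin m → ℝ) :
    ∑ p ∈ A, f p.1 p.2 = ∑ i, ∑ j ∈ NN A i, f j i := by
  calc ∑ p ∈ A, f p.1 p.2
      = ∑ p ∈ Finset.univ.filter (fun p : Fin m × Fin m => p ∈ A), f p.1 p.2 := by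
        rw [Finset.filter_univ_mem]
    _ = ∑ p : Fin m × Fin m, if p ∈ A then f p.1 p.2 else 0 := Finset.sum_filter _ _
    _ = ∑ j, ∑ i, if (j, i) ∈ A then f j i else 0 := Fintype.sum_prod_type _
    _ = ∑ i, ∑ j, if (j, i) ∈ A then f j i else 0 := Finset.sum_comm
    _ = ∑ i, ∑ j ∈ NN A i, f j i := by
        refine Finset.sum_congr rfl fun i _ => ?_
        rw [NN, Finset.sum_filter]

lemma sum_A_swap (hsym : ∀ p ∈ A, (p.2, p.1) ∈ A) (f : Fin m → Fin m → ℝ) :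
    ∑ p ∈ A, f p.1 p.2 = ∑ p ∈ A, f p.2 p.1 := by
  exact Finset.sum_nbij' (fun p => (p.2, p.1)) (fun p => (p.2, p.1))
    (fun p hp => hsym p hp) (fun p hp => hsym p hp) (by simp) (by simp)
    (fun p hp => rfl)

noncomputable def RR (x y : Fin m → Fin n → ℝ) : ℝ :=
  ∑ p ∈ A, (MM C p.2 p.1).mulVec (x p.2 - x p.1) ⬝ᵥ y p.2

lemma dot_self_nonneg {N : ℕ} (v : Fin N → ℝ) : 0 ≤ v ⬝ᵥ v :=
  Finset.sum_nonneg fun i _ => mul_self_nonneg _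

lemma dot_CS {N : ℕ} (a b : Fin N → ℝ) : (a ⬝ᵥ b) ^ 2 ≤ (a ⬝ᵥ a) * (b ⬝ᵥ b) := by
  have h := Finset.sum_mul_sq_le_sq_mul_sq Finset.univ a b
  simpa [dotProduct, sq] using h

lemma gram {N : ℕ} (C1 : Matrix (Fin N) (Fin n) ℝ) (v w : Fin n → ℝ) :
    ((C1ᵀ * C1).mulVec v) ⬝ᵥ w = (C1.mulVec v) ⬝ᵥ (C1.mulVec w) := by
  rw [← Matrix.mulVec_mulVec, dotProduct_comm, Matrix.dotProduct_mulVec,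
    Matrix.vecMul_transpose, dotProduct_comm]

lemma quad_expand (i j : Fin m) (v w : Fin n → ℝ) :
    (MM C i j).mulVec v ⬝ᵥ w =
      ((C i j).mulVec v) ⬝ᵥ ((C i j).mulVec w) +
      ((C j i).mulVec v) ⬝ᵥ ((C j i).mulVec w) := by
  rw [MM, Matrix.add_mulVec, add_dotProduct, gram, gram]

lemma quad_nonneg (i j : Fin m) (v : Fin n → ℝ) :
    0 ≤ (MM C i j).mulVec v ⬝ᵥ v := by
  rw [quad_expand]
  have h1 := dot_self_nonneg ((C i j).mulVec v)
  have h2 := dot_self_nonneg ((C j i).mulVec v)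
  linarith

lemma quad_symm (i j : Fin m) (v w : Fin n → ℝ) :
    (MM C i j).mulVec v ⬝ᵥ w = (MM C i j).mulVec w ⬝ᵥ v := by
  rw [quad_expand, quad_expand, dotProduct_comm ((C i j).mulVec v),
    dotProduct_comm ((C j i).mulVec v)]

lemma MM_comm (i j : Fin m) : MM C i j = MM C j i := by
  rw [MM, MM, add_comm]

/-- orthonormal rows give a contraction -/
lemma contract {k' : ℕ} (C1 : Matrix (Fin k') (Fin n) ℝ) (h : C1 * C1ᵀ = 1)
    (v : Fin n → ℝ) : (C1.mulVec v) ⬝ᵥ (C1.mulVec v) ≤ v ⬝ᵥ v := by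
  set u := C1.mulVec v with hu
  set P := C1ᵀ * C1 with hP
  have h1 : (P.mulVec v) ⬝ᵥ (P.mulVec v) = u ⬝ᵥ u := by
    have : P.mulVec v = C1ᵀ.mulVec u := by rw [hP, hu, ← Matrix.mulVec_mulVec]
    rw [this]
    have hg := gram C1ᵀ u u
    rw [Matrix.transpose_transpose] at hg
    rw [← hg, h, Matrix.one_mulVec]
  have h2 : P.mulVec v ⬝ᵥ v = u ⬝ᵥ u := gram C1 v v
  have hcs := dot_CS (P.mulVec v) v
  rw [h2, h1] at hcs
  have hv := dot_self_nonneg v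
  have huu := dot_self_nonneg u
  rcases eq_or_lt_of_le huu with h0 | hpos
  · rw [← h0]; exact hv
  · nlinarith

lemma quad_le (hsym : ∀ p ∈ A, (p.2, p.1) ∈ A)
    (horth : ∀ p ∈ A, C p.1 p.2 * (C p.1 p.2)ᵀ = 1)
    {p : Fin m × Fin m} (hp : p ∈ A) (v : Fin n → ℝ) :
    (MM C p.2 p.1).mulVec v ⬝ᵥ v ≤ 2 * (v ⬝ᵥ v) := by
  rw [quad_expand]
  have h1 := contract (C p.2 p.1) (horth (p.2, p.1) (hsym p hp)) v
  have h2 := contract (C p.1 p.2) (horth p hp) v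
  linarith

lemma Lmap_apply (x : Fin m → Fin n → ℝ) (i : Fin m) :
    Lmap A C x i = x i - (1 / (2 * ww A i)) •
      ∑ j ∈ NN A i, (MM C i j).mulVec (x i - x j) := rfl

lemma inner_Lmap (x y : Fin m → Fin n → ℝ) :
    ⟪ee A (Lmap A C x), ee A y⟫ = ⟪ee A x, ee A y⟫ - (1/2) * RR A C x y := by
  rw [inner_ee, inner_ee]
  have key : ∀ i : Fin m, ww A i * ∑ a, Lmap A C x i a * y i a
      = ww A i * ∑ a, x i a * y i a
        - (1/2) * ∑ j ∈ NN A i, (MM C i j).mulVec (x i - x j) ⬝ᵥ y i := by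
    intro i
    have hswap : ∑ a, (∑ j ∈ NN A i, (MM C i j).mulVec (x i - x j)) a * y i a
        = ∑ j ∈ NN A i, (MM C i j).mulVec (x i - x j) ⬝ᵥ y i := by
      simp only [Finset.sum_apply, Finset.sum_mul]
      rw [Finset.sum_comm]
      rfl
    have h1 : ∑ a, Lmap A C x i a * y i a
        = (∑ a, x i a * y i a) - (1 / (2 * ww A i)) *
            ∑ j ∈ NN A i, (MM C i j).mulVec (x i - x j) ⬝ᵥ y i := by
      rw [← hswap, Finset.mul_sum, ← Finset.sum_sub_distrib]
      refine Finset.sum_congr rfl fun a _ => ?_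
      rw [Lmap_apply]
      simp only [Pi.sub_apply, Pi.smul_apply, smul_eq_mul]
      ring
    have hw : ww A i ≠ 0 := ne_of_gt (ww_pos A i)
    rw [h1, mul_sub, ← mul_assoc]
    have : ww A i * (1 / (2 * ww A i)) = 1/2 := by field_simp
    rw [this]
  rw [Finset.sum_congr rfl (fun i _ => key i), Finset.sum_sub_distrib, ← Finset.mul_sum,
    RR, sum_A A (fun j i => (MM C i j).mulVec (x i - x j) ⬝ᵥ y i)]

lemma RR_half (hsym : ∀ p ∈ A, (p.2, p.1) ∈ A) (x y : Fin m → Fin n → ℝ) :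
    RR A C x y = (1/2) * ∑ p ∈ A,
      (MM C p.2 p.1).mulVec (x p.2 - x p.1) ⬝ᵥ (y p.2 - y p.1) := by
  have h2 : RR A C x y = ∑ p ∈ A, -((MM C p.2 p.1).mulVec (x p.2 - x p.1) ⬝ᵥ y p.1) := by
    rw [RR, sum_A_swap A hsym (fun j i => (MM C i j).mulVec (x i - x j) ⬝ᵥ y i)]
    refine Finset.sum_congr rfl fun p hp => ?_
    rw [MM_comm, show x p.1 - x p.2 = -(x p.2 - x p.1) from (neg_sub _ _).symm,
      Matrix.mulVec_neg, neg_dotProduct]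
  have h3 : RR A C x y * 2 = ∑ p ∈ A,
      (MM C p.2 p.1).mulVec (x p.2 - x p.1) ⬝ᵥ (y p.2 - y p.1) := by
    calc RR A C x y * 2 = RR A C x y + RR A C x y := by ring
      _ = ∑ p ∈ A, ((MM C p.2 p.1).mulVec (x p.2 - x p.1) ⬝ᵥ y p.2
            + -((MM C p.2 p.1).mulVec (x p.2 - x p.1) ⬝ᵥ y p.1)) := by
          rw [Finset.sum_add_distrib]
          exact congrArg₂ (· + ·) rfl h2
      _ = _ := by
          refine Finset.sum_congr rfl fun p hp => ?_
          rw [dotProduct_sub]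
          ring
  linarith

lemma RR_symm (hsym : ∀ p ∈ A, (p.2, p.1) ∈ A) (x y : Fin m → Fin n → ℝ) :
    RR A C x y = RR A C y x := by
  rw [RR_half A C hsym x y, RR_half A C hsym y x]
  congr 1
  refine Finset.sum_congr rfl fun p hp => ?_
  exact quad_symm C _ _ _ _

lemma RR_self_nonneg (hsym : ∀ p ∈ A, (p.2, p.1) ∈ A) (x : Fin m → Fin n → ℝ) :
    0 ≤ RR A C x x := by
  rw [RR_half A C hsym x x]
  have h : 0 ≤ ∑ p ∈ A, (MM C p.2 p.1).mulVec (x p.2 - x p.1) ⬝ᵥ (x p.2 - x p.1) :=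
    Finset.sum_nonneg fun p _ => quad_nonneg C _ _ _
  linarith

lemma RR_self_le (hsym : ∀ p ∈ A, (p.2, p.1) ∈ A)
    (horth : ∀ p ∈ A, C p.1 p.2 * (C p.1 p.2)ᵀ = 1) (x : Fin m → Fin n → ℝ) :
    RR A C x x ≤ 4 * ∑ i, ((NN A i).card : ℝ) * ∑ a, x i a * x i a := by
  set E : Fin m → ℝ := fun i => ∑ a, x i a * x i a with hE
  have h1 : RR A C x x ≤ ∑ p ∈ A, (x p.2 - x p.1) ⬝ᵥ (x p.2 - x p.1) := by
    rw [RR_half A C hsym x x]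
    have hb : ∑ p ∈ A, (MM C p.2 p.1).mulVec (x p.2 - x p.1) ⬝ᵥ (x p.2 - x p.1)
        ≤ ∑ p ∈ A, 2 * ((x p.2 - x p.1) ⬝ᵥ (x p.2 - x p.1)) :=
      Finset.sum_le_sum fun p hp => quad_le A C hsym horth hp _
    calc (1/2) * ∑ p ∈ A, (MM C p.2 p.1).mulVec (x p.2 - x p.1) ⬝ᵥ (x p.2 - x p.1)
        ≤ (1/2) * ∑ p ∈ A, 2 * ((x p.2 - x p.1) ⬝ᵥ (x p.2 - x p.1)) := by linarith
      _ = ∑ p ∈ A, (x p.2 - x p.1) ⬝ᵥ (x p.2 - x p.1) := by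
          rw [← Finset.mul_sum]; ring
  have h2 : ∀ p : Fin m × Fin m, (x p.2 - x p.1) ⬝ᵥ (x p.2 - x p.1)
      ≤ 2 * E p.2 + 2 * E p.1 := by
    intro p
    have : ∀ a : Fin n, (x p.2 a - x p.1 a) * (x p.2 a - x p.1 a)
        ≤ 2 * (x p.2 a * x p.2 a) + 2 * (x p.1 a * x p.1 a) := by
      intro a; nlinarith [sq_nonneg (x p.2 a + x p.1 a)]
    calc (x p.2 - x p.1) ⬝ᵥ (x p.2 - x p.1)
        = ∑ a, (x p.2 a - x p.1 a) * (x p.2 a - x p.1 a) := rfl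
      _ ≤ ∑ a, (2 * (x p.2 a * x p.2 a) + 2 * (x p.1 a * x p.1 a)) :=
          Finset.sum_le_sum fun a _ => this a
      _ = 2 * E p.2 + 2 * E p.1 := by
          rw [Finset.sum_add_distrib, ← Finset.mul_sum, ← Finset.mul_sum]
  have hA2 : ∑ p ∈ A, E p.2 = ∑ i, ((NN A i).card : ℝ) * E i := by
    rw [sum_A A (fun j i => E i)]
    refine Finset.sum_congr rfl fun i _ => ?_
    rw [Finset.sum_const, nsmul_eq_mul]
  have hA1 : ∑ p ∈ A, E p.1 = ∑ i, ((NN A i).card : ℝ) * E i := by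
    rw [sum_A_swap A hsym (fun j i => E j)]
    exact hA2
  calc RR A C x x ≤ ∑ p ∈ A, (x p.2 - x p.1) ⬝ᵥ (x p.2 - x p.1) := h1
    _ ≤ ∑ p ∈ A, (2 * E p.2 + 2 * E p.1) := Finset.sum_le_sum fun p _ => h2 p
    _ = 2 * ∑ p ∈ A, E p.2 + 2 * ∑ p ∈ A, E p.1 := by
        rw [Finset.sum_add_distrib, ← Finset.mul_sum, ← Finset.mul_sum]
    _ = 4 * ∑ i, ((NN A i).card : ℝ) * E i := by rw [hA2, hA1]; ring

lemma RR_self_zero (hsym : ∀ p ∈ A, (p.2, p.1) ∈ A) (x : Fin m → Fin n → ℝ)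
    (h : RR A C x x = 0) :
    ∀ j i : Fin m, (j, i) ∈ A → (C j i).mulVec (x j - x i) = 0 := by
  rw [RR_half A C hsym x x] at h
  have hz : ∀ p ∈ A, (MM C p.2 p.1).mulVec (x p.2 - x p.1) ⬝ᵥ (x p.2 - x p.1) = 0 := by
    have hsum : ∑ p ∈ A, (MM C p.2 p.1).mulVec (x p.2 - x p.1) ⬝ᵥ (x p.2 - x p.1) = 0 := by
      linarith
    exact (Finset.sum_eq_zero_iff_of_nonneg
      (fun p _ => quad_nonneg C _ _ _)).1 hsum
  intro j i hji
  have h0 := hz (j, i) hji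
  rw [quad_expand] at h0
  have h1 := dot_self_nonneg ((C i j).mulVec (x i - x j))
  have h2 := dot_self_nonneg ((C j i).mulVec (x i - x j))
  have h3 : (C j i).mulVec (x i - x j) ⬝ᵥ (C j i).mulVec (x i - x j) = 0 := by
    simp only at h0 h1 h2
    linarith
  have h4 : (C j i).mulVec (x i - x j) = 0 := dotProduct_self_eq_zero.1 h3
  rw [show x j - x i = -(x i - x j) from (neg_sub _ _).symm, Matrix.mulVec_neg, h4,
    neg_zero]

lemma Lmap_fixed {x : Fin m → Fin n → ℝ} {z : Fin n → ℝ} (h : ∀ i, x i = z) :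
    Lmap A C x = x := by
  funext i
  show x i - _ = x i
  have : ∀ j ∈ NN A i, (MM C i j).mulVec (x i - x j) = 0 := by
    intro j _
    rw [h i, h j, sub_self, Matrix.mulVec_zero]
  rw [Finset.sum_congr rfl this]
  simp

lemma coord_le (v : EuclideanSpace ℝ (Fin m × Fin n)) (i : Fin m) :
    ‖(ee A).symm v i‖ ≤ ‖v‖ := by
  rw [pi_norm_le_iff_of_nonneg (norm_nonneg v)]
  intro a
  have habs : |v (i, a)| ≤ ‖v‖ := by
    calc |v (i, a)| = Real.sqrt (‖v (i, a)‖ ^ 2) := by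
          rw [Real.sqrt_sq (norm_nonneg _), Real.norm_eq_abs]
      _ ≤ Real.sqrt (∑ p : Fin m × Fin n, ‖v p‖ ^ 2) := by
          apply Real.sqrt_le_sqrt
          exact Finset.single_le_sum (fun p _ => sq_nonneg ‖v p‖)
            (Finset.mem_univ (i, a))
      _ = ‖v‖ := (EuclideanSpace.norm_eq v).symm
  have hs : 1 ≤ Real.sqrt (ww A i) := by
    rw [show (1:ℝ) = Real.sqrt 1 from Real.sqrt_one.symm]
    exact Real.sqrt_le_sqrt (ww_ge_one A i)
  calc ‖(ee A).symm v i a‖ = |v (i, a)| / Real.sqrt (ww A i) := by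
        rw [ee_symm_apply, Real.norm_eq_abs, abs_div,
          abs_of_nonneg (Real.sqrt_nonneg _)]
    _ ≤ |v (i, a)| := by
        apply div_le_self (abs_nonneg _) hs
    _ ≤ ‖v‖ := habs

end Defs

end Stmt7

/-- On a strongly connected symmetric directed graph (arc set `A`, matrix `C j i`
with orthonormal rows on arc `(j,i)`) that is well-configured, the fixed-stepsize algorithm
`x i (t+1) = x i t − (1/(2(dᵢ+1))) ∑_{j ∈ N_i} (C i jᵀ C i j + C j iᵀ C j i)(x i t − x j t)`
drives all agents to a consensus exponentially fast. -/
theorem stmt_7 (m n : ℕ) (A : Finset (Fin m × Fin m))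
    (hsym : ∀ p ∈ A, (p.2, p.1) ∈ A)
    (hsc : ∀ u v : Fin m, Relation.ReflTransGen (fun a b => (a, b) ∈ A) u v)
    (k : Fin m → Fin m → ℕ)
    (C : (j i : Fin m) → Matrix (Fin (k j i)) (Fin n) ℝ)
    (horth : ∀ p ∈ A, C p.1 p.2 * (C p.1 p.2)ᵀ = 1)
    (hwc : ∀ x : Fin m → (Fin n → ℝ),
      (∀ j i : Fin m, (j, i) ∈ A → (C j i).mulVec (x j - x i) = 0) ↔
        ∃ z : Fin n → ℝ, ∀ i, x i = z)
    (x : ℕ → Fin m → (Fin n → ℝ))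
    (hupd : ∀ t (i : Fin m), x (t + 1) i = x t i -
      (1 / (2 * ((Finset.univ.filter (fun j : Fin m => (j, i) ∈ A)).card + 1)) : ℝ) •
        ∑ j ∈ Finset.univ.filter (fun j : Fin m => (j, i) ∈ A),
          ((C i j)ᵀ * C i j + (C j i)ᵀ * C j i).mulVec (x t i - x t j)) :
    ∃ (z : Fin n → ℝ) (c ρ : ℝ), 0 ≤ c ∧ 0 ≤ ρ ∧ ρ < 1 ∧
      ∀ (i : Fin m) (t : ℕ), ‖x t i - z‖ ≤ c * ρ ^ t := by
  classical
  let X := EuclideanSpace ℝ (Fin m × Fin n)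
  let e := Stmt7.ee (m := m) (n := n) A
  let L := Stmt7.Lmap A C
  let T : X →ₗ[ℝ] X := (e.toLinearMap.comp L).comp e.symm.toLinearMap
  have hTdef : ∀ u : X, T u = e (L (e.symm u)) := fun u => rfl
  have hTe : ∀ y, T (e y) = e (L y) := by
    intro y; rw [hTdef, e.symm_apply_apply]
  -- the update is the linear map L
  have hL : ∀ t, x (t + 1) = L (x t) := by
    intro t; funext i
    rw [hupd t i]
    rfl
  -- inner product formula for T
  have hinner : ∀ u v : X, ⟪T u, v⟫ = ⟪u, v⟫
      - (1/2) * Stmt7.RR A C (e.symm u) (e.symm v) := by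
    intro u v
    have h := Stmt7.inner_Lmap A C (e.symm u) (e.symm v)
    rw [LinearEquiv.apply_symm_apply, LinearEquiv.apply_symm_apply] at h
    rw [hTdef]; exact h
  have hsymT : ∀ u v : X, ⟪T u, v⟫ = ⟪u, T v⟫ := by
    intro u v
    rw [hinner u v]
    have h2 : ⟪u, T v⟫ = ⟪T v, u⟫ := real_inner_comm _ _
    rw [h2, hinner v u, Stmt7.RR_symm A C hsym, real_inner_comm v u]
  let Φ : X → ℝ := fun u => ⟪u - T u, u⟫
  have hΦdef : ∀ u, Φ u = ⟪u - T u, u⟫ := fun _ => rfl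
  have hΦRR : ∀ u, Φ u = (1/2) * Stmt7.RR A C (e.symm u) (e.symm u) := by
    intro u
    rw [hΦdef, inner_sub_left, hinner u u]
    ring
  have hΦ0 : ∀ u, 0 ≤ Φ u := by
    intro u
    rw [hΦRR]
    have := Stmt7.RR_self_nonneg A C hsym (e.symm u)
    linarith
  have hfix : ∀ u, Φ u = 0 → T u = u := by
    intro u hu
    rw [hΦRR] at hu
    have hRR : Stmt7.RR A C (e.symm u) (e.symm u) = 0 := by linarith
    have harcs := Stmt7.RR_self_zero A C hsym (e.symm u) hRR
    obtain ⟨z, hz⟩ := (hwc (e.symm u)).1 harcs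
    have hLf : L (e.symm u) = e.symm u := Stmt7.Lmap_fixed A C hz
    rw [hTdef, hLf, e.apply_symm_apply]
  have hfix' : ∀ u, T u = u → Φ u = 0 := by
    intro u hu
    rw [hΦdef, hu, sub_self, inner_zero_left]
  let S : Submodule ℝ X := LinearMap.ker (LinearMap.id - T)
  have hmemS : ∀ u, u ∈ S ↔ T u = u := by
    intro u
    simp only [S, LinearMap.mem_ker, LinearMap.sub_apply, LinearMap.id_apply,
      sub_eq_zero]
    exact eq_comm
  -- the contraction constant
  let Dmax : ℕ := Finset.univ.sup (fun i => (Stmt7.NN A i).card)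
  let κ : ℝ := 2 * (Dmax : ℝ) / ((Dmax : ℝ) + 1)
  have hDpos : (0:ℝ) < (Dmax : ℝ) + 1 := by positivity
  have hκ0 : 0 ≤ κ := by positivity
  have hκ2 : κ < 2 := by
    rw [div_lt_iff₀ hDpos]
    have : (0:ℝ) ≤ (Dmax : ℝ) := Nat.cast_nonneg _
    linarith
  have hform : ∀ u : X, Φ u ≤ κ * ‖u‖^2 := by
    intro u
    set y := e.symm u with hy
    have hRle := Stmt7.RR_self_le A C hsym horth y
    have hnorm : ‖u‖^2 = ∑ i, Stmt7.ww A i * ∑ a, y i a * y i a := by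
      rw [← real_inner_self_eq_norm_sq]
      have : u = e y := (e.apply_symm_apply u).symm
      rw [this, Stmt7.inner_ee]
    have hper : ∀ i : Fin m, ((Stmt7.NN A i).card : ℝ) * (∑ a, y i a * y i a)
        ≤ ((Dmax : ℝ) / ((Dmax : ℝ) + 1)) * (Stmt7.ww A i * ∑ a, y i a * y i a) := by
      intro i
      have hE : 0 ≤ ∑ a, y i a * y i a :=
        Finset.sum_nonneg fun a _ => mul_self_nonneg _
      have hd : ((Stmt7.NN A i).card : ℝ) ≤ (Dmax : ℝ) := by
        have h := Finset.le_sup (f := fun i => (Stmt7.NN A i).card)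
          (Finset.mem_univ i)
        exact_mod_cast h
      rw [Stmt7.ww, div_mul_eq_mul_div, le_div_iff₀ hDpos]
      have hc : (0:ℝ) ≤ ((Stmt7.NN A i).card : ℝ) := Nat.cast_nonneg _
      nlinarith
    have hsum : ∑ i, ((Stmt7.NN A i).card : ℝ) * (∑ a, y i a * y i a)
        ≤ ((Dmax : ℝ) / ((Dmax : ℝ) + 1)) *
            ∑ i, Stmt7.ww A i * ∑ a, y i a * y i a := by
      rw [Finset.mul_sum]
      exact Finset.sum_le_sum fun i _ => hper i
    have hΦu := hΦRR u
    rw [hΦu, hnorm]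
    have hκeq : κ = 2 * ((Dmax : ℝ) / ((Dmax : ℝ) + 1)) := by
      show 2 * (Dmax : ℝ) / ((Dmax : ℝ) + 1) = 2 * ((Dmax : ℝ) / ((Dmax : ℝ) + 1))
      rw [mul_div_assoc]
    rw [hκeq]
    linarith
  -- Cauchy-Schwarz for the positive semidefinite form
  have hBsymm : ∀ u v : X, ⟪u - T u, v⟫ = ⟪v - T v, u⟫ := by
    intro u v
    simp only [inner_sub_left]
    rw [hsymT v u, real_inner_comm v u, real_inner_comm v (T u)]
  have hCS : ∀ u v : X, (⟪u - T u, v⟫)^2 ≤ Φ u * Φ v := by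
    intro u v
    have key : ∀ t : ℝ, 0 ≤ Φ v * (t*t) + (2*⟪u - T u, v⟫) * t + Φ u := by
      intro t
      have hexp : Φ (u + t • v) = Φ u + 2*t*⟪u - T u, v⟫ + t*t*Φ v := by
        rw [hΦdef]
        rw [map_add, T.map_smul]
        have hre : (u + t • v) - (T u + t • T v) = (u - T u) + t • (v - T v) := by
          rw [smul_sub]; abel
        rw [hre]
        simp only [inner_add_left, inner_add_right, real_inner_smul_left,
          real_inner_smul_right]
        rw [hΦdef, hΦdef]
        linear_combination t * hBsymm v u
      calc (0:ℝ) ≤ Φ (u + t • v) := hΦ0 _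
        _ = Φ v * (t*t) + (2*⟪u - T u, v⟫) * t + Φ u := by rw [hexp]; ring
    have hd := discrim_le_zero key
    rw [discrim] at hd
    nlinarith [hd]
  have hDu : ∀ u : X, ‖u - T u‖^2 ≤ κ * Φ u := by
    intro u
    have h1 : ⟪u - T u, u - T u⟫ = ‖u - T u‖^2 := real_inner_self_eq_norm_sq _
    have h2 := hCS u (u - T u)
    rw [h1] at h2
    have h3 := hform (u - T u)
    have h5 := hΦ0 u
    rcases eq_or_lt_of_le (sq_nonneg ‖u - T u‖) with h0 | hpos
    · rw [← h0]
      exact mul_nonneg hκ0 h5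
    · nlinarith
  have hcontract : ∀ u : X, ‖T u‖^2 ≤ ‖u‖^2 - (2 - κ) * Φ u := by
    intro u
    have hTu : T u = u - (u - T u) := by abel
    have hip : ⟪u, u - T u⟫ = Φ u := by
      rw [real_inner_comm, hΦdef]
    rw [hTu, norm_sub_sq_real, hip]
    linarith [hDu u]
  have hTperp : ∀ u ∈ Sᗮ, T u ∈ Sᗮ := by
    intro u hu
    rw [Submodule.mem_orthogonal]
    intro s hs
    have hTs : T s = s := (hmemS s).1 hs
    calc ⟪s, T u⟫ = ⟪T s, u⟫ := by
          rw [real_inner_comm, hsymT u s, hTs, real_inner_comm]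
      _ = ⟪s, u⟫ := by rw [hTs]
      _ = 0 := (Submodule.mem_orthogonal S u).1 hu s hs
  have hstrict : ∀ u ∈ Sᗮ, u ≠ 0 → ‖T u‖ < ‖u‖ := by
    intro u hu hne
    have hΦpos : 0 < Φ u := by
      rcases (hΦ0 u).eq_or_lt with h0 | h
      · exfalso
        have hTu : T u = u := hfix u h0.symm
        have huS : u ∈ S := (hmemS u).2 hTu
        have : ⟪u, u⟫ = (0:ℝ) := (Submodule.mem_orthogonal S u).1 hu u huS
        rw [real_inner_self_eq_norm_sq] at this
        exact hne (by simpa using norm_eq_zero.1 ((pow_eq_zero_iff (n := 2) (by norm_num)).1 this))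
      · exact h
    have h := hcontract u
    have hsq : ‖T u‖^2 < ‖u‖^2 := by nlinarith
    nlinarith [norm_nonneg (T u), norm_nonneg u]
  -- contraction factor on the orthogonal complement
  have hρ : ∃ ρ : ℝ, 0 ≤ ρ ∧ ρ < 1 ∧ ∀ u ∈ Sᗮ, ‖T u‖ ≤ ρ * ‖u‖ := by
    by_cases hK : ∀ u ∈ Sᗮ, u = (0:X)
    · refine ⟨0, le_refl 0, by norm_num, fun u hu => ?_⟩
      rw [hK u hu]; simp
    · push_neg at hK
      obtain ⟨u0, hu0, hu0ne⟩ := hK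
      have hn0 : ‖u0‖ ≠ 0 := norm_ne_zero_iff.2 hu0ne
      set K : Set X := (Sᗮ : Set X) ∩ Metric.sphere 0 1 with hKdef
      have hKc : IsCompact K := by
        have h1 : IsClosed ((Sᗮ : Submodule ℝ X) : Set X) :=
          Submodule.closed_of_finiteDimensional _
        exact (isCompact_sphere (0:X) 1).inter_left h1
      have hKne : K.Nonempty := by
        refine ⟨‖u0‖⁻¹ • u0, ⟨Submodule.smul_mem _ _ hu0, ?_⟩⟩
        simp [norm_smul, hn0]
      have hcont : ContinuousOn (fun u : X => ‖T u‖) K :=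
        (T.continuous_of_finiteDimensional.norm).continuousOn
      obtain ⟨u₁, hu₁K, hmax'⟩ := hKc.exists_isMaxOn hKne hcont
      have hmax : ∀ y ∈ K, ‖T y‖ ≤ ‖T u₁‖ := fun y hy => hmax' hy
      have hu₁n : ‖u₁‖ = 1 := by
        have := hu₁K.2
        simpa using this
      have hu₁ne : u₁ ≠ 0 := by
        intro h; rw [h] at hu₁n; simp at hu₁n
      refine ⟨‖T u₁‖, norm_nonneg _, ?_, ?_⟩
      · have := hstrict u₁ hu₁K.1 hu₁ne
        rw [hu₁n] at this
        exact this
      · intro u hu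
        by_cases h0 : u = 0
        · simp [h0]
        · have hn : ‖u‖ ≠ 0 := norm_ne_zero_iff.2 h0
          have hmem : ‖u‖⁻¹ • u ∈ K := by
            refine ⟨Submodule.smul_mem _ _ hu, ?_⟩
            simp [norm_smul, hn]
          have hle := hmax _ hmem
          rw [T.map_smul, norm_smul] at hle
          simp only [norm_inv, norm_norm, Real.norm_eq_abs, abs_norm] at hle
          have hnn : 0 < ‖u‖ := lt_of_le_of_ne (norm_nonneg u) (Ne.symm hn)
          calc ‖T u‖ = ‖u‖ * (‖u‖⁻¹ * ‖T u‖) := by field_simp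
            _ ≤ ‖u‖ * ‖T u₁‖ := by
                have h2 : ‖u‖⁻¹ * ‖T u‖ ≤ ‖T u₁‖ := by rw [← abs_of_nonneg hnn.le]; exact hle
                exact mul_le_mul_of_nonneg_left h2 (norm_nonneg u)
            _ = ‖T u₁‖ * ‖u‖ := mul_comm _ _
  obtain ⟨ρ, hρ0, hρ1, hρb⟩ := hρ
  -- decompose the initial condition
  let u0 : X := e (x 0)
  let s0 : X := (S.orthogonalProjectionOnto u0 : X)
  let w0 : X := u0 - s0
  have hs0S : s0 ∈ S := SetLike.coe_mem _
  have hw0 : w0 ∈ Sᗮ := Submodule.sub_starProjection_mem_orthogonal (K := S) u0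
  have hTs0 : T s0 = s0 := (hmemS _).1 hs0S
  have htraj : ∀ t, e (x t) = s0 + (T^t) w0 := by
    intro t
    induction t with
    | zero =>
      show e (x 0) = s0 + (T^0) w0
      rw [pow_zero]
      show u0 = s0 + w0
      rw [add_sub_cancel]
    | succ t ih =>
      have h1 : e (x (t+1)) = T (e (x t)) := by
        rw [hL t, hTe]
      rw [h1, ih, map_add, hTs0, pow_succ']
      rfl
  have hperp_t : ∀ t, (T^t) w0 ∈ Sᗮ := by
    intro t
    induction t with
    | zero => rw [pow_zero]; exact hw0
    | succ t ih =>
      rw [pow_succ']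
      exact hTperp _ ih
  have hbound : ∀ t, ‖(T^t) w0‖ ≤ ρ^t * ‖w0‖ := by
    intro t
    induction t with
    | zero => rw [pow_zero, pow_zero, one_mul]; rfl
    | succ t ih =>
      have h1 : (T^(t+1)) w0 = T ((T^t) w0) := by rw [pow_succ']; rfl
      calc ‖(T^(t+1)) w0‖ = ‖T ((T^t) w0)‖ := by rw [h1]
        _ ≤ ρ * ‖(T^t) w0‖ := hρb _ (hperp_t t)
        _ ≤ ρ * (ρ^t * ‖w0‖) := mul_le_mul_of_nonneg_left ih hρ0
        _ = ρ^(t+1) * ‖w0‖ := by ring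
  -- the consensus point
  have hΦs0 : Φ s0 = 0 := hfix' s0 hTs0
  have hRRs0 : Stmt7.RR A C (e.symm s0) (e.symm s0) = 0 := by
    have := hΦRR s0
    rw [hΦs0] at this
    linarith
  obtain ⟨z, hz⟩ := (hwc (e.symm s0)).1
    (Stmt7.RR_self_zero A C hsym (e.symm s0) hRRs0)
  refine ⟨z, ‖w0‖, ρ, norm_nonneg w0, hρ0, hρ1, ?_⟩
  intro i t
  have hxt : x t = e.symm (s0 + (T^t) w0) := by
    rw [← htraj t, e.symm_apply_apply]
  have hdiff : x t i - z = (e.symm ((T^t) w0)) i := by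
    rw [hxt, map_add]
    show (e.symm s0 + e.symm ((T^t) w0)) i - z = _
    rw [Pi.add_apply, hz i]
    abel
  rw [hdiff]
  calc ‖(e.symm ((T^t) w0)) i‖ ≤ ‖(T^t) w0‖ := Stmt7.coord_le A _ i
    _ ≤ ρ^t * ‖w0‖ := hbound t
    _ = ‖w0‖ * ρ^t := mul_comm _ _
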